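/- Let p be a prime and α, β ∈ ℤ⁺. In ℤ[t], the congruence (t−1)^{(β(p−1)+1)p^{α−1} − 1} ≡ (−p)^{β−1} · ∑_{i=0}^{p^α−1} t^i holds modulo the ideal generated by t^{p^α} − 1 and p^β. -/

import Mathlib

open Polynomial

lemma wilson_star (p : ℕ) (hp : p.Prime) :
    ∃ W : Polynomial ℤ, (X - 1 : Polynomial ℤ)^p
      = X^p - 1 - (p:Polynomial ℤ)*(X-1) + (p:Polynomial ℤ)*(X-1)^2*W := by
  have hp2 : 2 ≤ p := hp.two_le
  set P : Polynomial ℤ := (X - 1)^p - (X^p - 1) + (p:Polynomial ℤ)*(X-1) with hP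
  have h1 : (X - C (1:ℤ)) ∣ P := by
    rw [Polynomial.dvd_iff_isRoot]
    simp [hP, IsRoot, zero_pow (by omega : p ≠ 0)]
  obtain ⟨Q, hQ⟩ := h1
  have hder : derivative P = Q + (X - C (1:ℤ)) * derivative Q := by
    rw [hQ]; simp [mul_comm]; ring
  have hQ1 : (X - C (1:ℤ)) ∣ Q := by
    rw [Polynomial.dvd_iff_isRoot]
    have h2 : P.derivative.IsRoot 1 := by
      rw [hP]
      simp [derivative_pow, IsRoot, zero_pow (by omega : p - 1 ≠ 0)]
    rw [hder] at h2
    simpa [IsRoot] using h2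
  obtain ⟨R, hR⟩ := hQ1
  have hpd : (C (p:ℤ)) ∣ P := by
    rw [Polynomial.C_dvd_iff_dvd_coeff]
    intro i
    have hm : Polynomial.map (Int.castRingHom (ZMod p)) P = 0 := by
      haveI : Fact p.Prime := ⟨hp⟩
      simp [hP, Polynomial.map_pow, Polynomial.map_sub, Polynomial.map_add]
      rw [sub_pow_char]
      ring
    have := congrArg (fun q => Polynomial.coeff q i) hm
    simpa [Polynomial.coeff_map, ZMod.intCast_zmod_eq_zero_iff_dvd] using this
  have hprime : Prime (C (p:ℤ)) := Polynomial.prime_C_iff.mpr (Nat.prime_iff_prime_int.mp hp)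
  have hPQ : P = (X - C 1)^2 * R := by rw [hQ, hR]; ring
  have hdvdR : C (p:ℤ) ∣ R := by
    have h := hpd
    rw [hPQ, pow_two, mul_assoc] at h
    have hnd : ¬ (C (p:ℤ) ∣ (X - C (1:ℤ))) := by
      intro hc
      have h2 := map_dvd (Polynomial.evalRingHom (2:ℤ)) hc
      have h3 : (p:ℤ) ∣ 1 := by simpa using h2
      have h4 := Int.le_of_dvd one_pos h3
      omega
    rcases (hprime.2.2 _ _ h) with h' | h'
    · exact absurd h' hnd
    rcases (hprime.2.2 _ _ h') with h'' | h''
    · exact absurd h'' hnd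
    · exact h''
  obtain ⟨W, hW⟩ := hdvdR
  refine ⟨W, ?_⟩
  have hfin : P = (p:Polynomial ℤ)*(X-1)^2*W := by
    rw [hPQ, hW]
    simp only [map_one, Polynomial.C_eq_natCast]
    ring
  rw [hP] at hfin
  linear_combination hfin

lemma wilson_binom2 {R : Type*} [CommRing R] (a b : R) :
    ∀ n : ℕ, 1 ≤ n → ∃ F : R, (a+b)^n = a^n + n*a^(n-1)*b + b^2*F := by
  intro n hn
  induction n, hn using Nat.le_induction with
  | base => exact ⟨0, by push_cast; ring⟩
  | succ n hn ih =>
    obtain ⟨F, hF⟩ := ih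
    refine ⟨(n:R)*a^(n-1) + F*(a+b), ?_⟩
    have ha : a^(n-1)*a = a^n := by rw [← pow_succ]; congr 1; omega
    have hb : a^n*a = a^(n+1) := by rw [← pow_succ]
    have hc : (a+b)^(n+1) = (a+b)^n*(a+b) := by rw [← pow_succ]
    push_cast
    linear_combination hc + (a+b)*hF + (n:R)*b*ha + hb - hb

lemma wilson_frob (p : ℕ) (hp : p.Prime) (k : ℕ) :
    ∃ u : Polynomial ℤ, (X - 1 : Polynomial ℤ)^(p^k) = X^(p^k) - 1 + (p:Polynomial ℤ)*(X-1)*u := by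
  induction k with
  | zero => exact ⟨0, by simp⟩
  | succ k ih =>
    obtain ⟨u, hu⟩ := ih
    obtain ⟨W, hW⟩ := wilson_star p hp
    have hW2 := congrArg (aeval ((X:Polynomial ℤ)^(p^k))) hW
    simp only [map_pow, map_sub, map_add, map_one, map_mul, aeval_X, map_natCast] at hW2
    set W' : Polynomial ℤ := aeval ((X:Polynomial ℤ)^(p^k)) W with hW'
    set Nk : Polynomial ℤ := ∑ i ∈ Finset.range (p^k), X^i with hNk
    have hg : Nk * (X - 1) = X^(p^k) - 1 := geom_sum_mul X (p^k)
    obtain ⟨F, hF⟩ := wilson_binom2 ((X:Polynomial ℤ)^(p^k) - 1) ((p:Polynomial ℤ)*(X-1)*u) p hp.one_le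
    refine ⟨-Nk + (X-1)*Nk^2*W' + (p:Polynomial ℤ)*u*(X^(p^k)-1)^(p-1) + (p:Polynomial ℤ)*(X-1)*u^2*F, ?_⟩
    simp only [pow_succ p k]
    calc (X - 1 : Polynomial ℤ)^(p^k*p) = ((X-1)^(p^k))^p := by rw [pow_mul]
      _ = ((X^(p^k) - 1) + (p:Polynomial ℤ)*(X-1)*u)^p := by rw [hu]
      _ = (X^(p^k)-1)^p + (p:Polynomial ℤ)*(X^(p^k)-1)^(p-1)*((p:Polynomial ℤ)*(X-1)*u)
            + ((p:Polynomial ℤ)*(X-1)*u)^2*F := hF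
      _ = X^(p^k*p) - 1 + (p:Polynomial ℤ)*(X-1)*(-Nk + (X-1)*Nk^2*W'
            + (p:Polynomial ℤ)*u*(X^(p^k)-1)^(p-1) + (p:Polynomial ℤ)*(X-1)*u^2*F) := by
        rw [hW2, ← pow_mul]
        linear_combination ((p:Polynomial ℤ) - (p:Polynomial ℤ)*W'*((X^(p^k)-1) + (X-1)*Nk)) * hg

lemma wilson_L3 (p : ℕ) (hp : p.Prime) (k : ℕ) :
    ∃ c g2 : Polynomial ℤ, (X - 1 : Polynomial ℤ)^(p^(k+1))
      = X^(p^(k+1)) - 1 - (p:Polynomial ℤ)*(X-1)^(p^k)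
        + (p:Polynomial ℤ)*(X-1)^(p^k+1)*c + (p:Polynomial ℤ)^2*(X-1)*g2 := by
  obtain ⟨u, hu⟩ := wilson_frob p hp k
  obtain ⟨W, hW⟩ := wilson_star p hp
  have hW2 := congrArg (aeval ((X:Polynomial ℤ)^(p^k))) hW
  simp only [map_pow, map_sub, map_add, map_one, map_mul, aeval_X, map_natCast] at hW2
  set W' : Polynomial ℤ := aeval ((X:Polynomial ℤ)^(p^k)) W with hW'
  set Nk : Polynomial ℤ := ∑ i ∈ Finset.range (p^k), X^i with hNk
  have hg : Nk * (X - 1) = X^(p^k) - 1 := geom_sum_mul X (p^k)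
  obtain ⟨F, hF⟩ := wilson_binom2 ((X:Polynomial ℤ)^(p^k) - 1) ((p:Polynomial ℤ)*(X-1)*u) p hp.one_le
  refine ⟨Nk*W',
    u + u*(X^(p^k)-1)^(p-1) + (X-1)*u^2*F - (X-1)*u*Nk*W', ?_⟩
  simp only [pow_succ p k]
  calc (X - 1 : Polynomial ℤ)^(p^k*p) = ((X-1)^(p^k))^p := by rw [pow_mul]
    _ = ((X^(p^k) - 1) + (p:Polynomial ℤ)*(X-1)*u)^p := by rw [hu]
    _ = (X^(p^k)-1)^p + (p:Polynomial ℤ)*(X^(p^k)-1)^(p-1)*((p:Polynomial ℤ)*(X-1)*u)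
          + ((p:Polynomial ℤ)*(X-1)*u)^2*F := hF
    _ = X^(p^k*p) - 1 - (p:Polynomial ℤ)*(X-1)^(p^k)
        + (p:Polynomial ℤ)*(X-1)^(p^k+1)*(Nk*W')
        + (p:Polynomial ℤ)^2*(X-1)*(u + u*(X^(p^k)-1)^(p-1) + (X-1)*u^2*F - (X-1)*u*Nk*W') := by
      rw [hW2, ← pow_mul]
      simp only [pow_succ]
      linear_combination ((p:Polynomial ℤ) - (p:Polynomial ℤ)*W'*(X-1)*Nk) * hu
        + (-(p:Polynomial ℤ)*W'*((X:Polynomial ℤ)^(p^k)-1)) * hg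

lemma wilson_base (p : ℕ) (hp : p.Prime) (k : ℕ) :
    ∃ C1 D1 : Polynomial ℤ, (X - 1 : Polynomial ℤ)^(p^(k+1) - 1)
      = (∑ i ∈ Finset.range (p^(k+1)), X^i) - (p:Polynomial ℤ)*(X-1)^(p^k - 1)
        + (p:Polynomial ℤ)*(X-1)^(p^k)*C1 + (p:Polynomial ℤ)^2*D1 := by
  obtain ⟨c, g2, h⟩ := wilson_L3 p hp k
  have hX : (X - 1 : Polynomial ℤ) ≠ 0 := by
    have := Polynomial.X_sub_C_ne_zero (1:ℤ)
    simpa using this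
  set N : Polynomial ℤ := ∑ i ∈ Finset.range (p^(k+1)), X^i with hN
  have hgq : N * (X - 1) = X^(p^(k+1)) - 1 := geom_sum_mul X (p^(k+1))
  have e1 : (X - 1 : Polynomial ℤ)^(p^(k+1)) = (X-1)^(p^(k+1)-1) * (X-1) := by
    rw [← pow_succ]
    congr 1
    have hq1 : 1 ≤ p^(k+1) := Nat.one_le_pow _ _ hp.pos
    omega
  have e2 : (X - 1 : Polynomial ℤ)^(p^k) = (X-1)^(p^k-1) * (X-1) := by
    rw [← pow_succ]
    congr 1
    have hq1 : 1 ≤ p^k := Nat.one_le_pow _ _ hp.pos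
    omega
  refine ⟨c, g2, ?_⟩
  apply mul_right_cancel₀ hX
  rw [← e1]
  rw [h]
  have e3 : (X - 1 : Polynomial ℤ)^(p^k+1) = (X-1)^(p^k) * (X-1) := pow_succ _ _
  linear_combination -hgq - (p:Polynomial ℤ)*e2 + (p:Polynomial ℤ)*c*e3

lemma wilson_M (p : ℕ) (hp : p.Prime) (k : ℕ) : ∀ β : ℕ, 1 ≤ β →
    ∃ A C D : Polynomial ℤ, (X - 1 : Polynomial ℤ)^((β*(p-1)+1)*p^k - 1)
      = (-(p:Polynomial ℤ))^(β-1) * (∑ i ∈ Finset.range (p^(k+1)), X^i)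
        + (-(p:Polynomial ℤ))^β * (X-1)^(p^k - 1)
        + A*(X^(p^(k+1)) - 1)
        + (-(p:Polynomial ℤ))^β * (X-1)^(p^k) * C
        + (-(p:Polynomial ℤ))^β * (p:Polynomial ℤ) * D := by
  have hp2 : 2 ≤ p := hp.two_le
  have hnk : 1 ≤ p^k := Nat.one_le_pow _ _ hp.pos
  have hqq : 1 ≤ p^(k+1) := Nat.one_le_pow _ _ hp.pos
  obtain ⟨C1, D1, hbase⟩ := wilson_base p hp k
  obtain ⟨c, g2, hL3⟩ := wilson_L3 p hp k
  set N : Polynomial ℤ := ∑ i ∈ Finset.range (p^(k+1)), X^i with hN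
  have hgq : N * (X - 1) = X^(p^(k+1)) - 1 := geom_sum_mul X (p^(k+1))
  intro β hβ
  induction β, hβ using Nat.le_induction with
  | base =>
    refine ⟨0, -C1, -D1, ?_⟩
    have he : (1*(p-1)+1)*p^k = p^(k+1) := by
      have h1 : 1*(p-1)+1 = p := by omega
      rw [h1, pow_succ]
      ring
    rw [he]
    simp only [pow_one, Nat.sub_self, pow_zero]
    linear_combination hbase
  | succ β hβ1 ih =>
    obtain ⟨A, C, D, hIH⟩ := ih
    set P : Polynomial ℤ := (p:Polynomial ℤ) with hP
    set T : Polynomial ℤ := (-P)^(β-1) with hT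
    have hT1 : (-P)^β = T*(-P) := by
      rw [hT, ← pow_succ]
      congr 1
      omega
    have hT2 : (-P)^(β+1) = T*(-P)*(-P) := by
      rw [hT, ← pow_succ, ← pow_succ]
      congr 1
      omega
    have hm1 : 1 ≤ (p-1)*p^k := Nat.mul_pos (by omega) (by omega)
    have ha1 : 1 ≤ (β*(p-1)+1)*p^k := Nat.mul_pos (by omega) (by omega)
    have E1 : ((β+1)*(p-1)+1)*p^k - 1 = ((β*(p-1)+1)*p^k - 1) + (p-1)*p^k := by
      have e : ((β+1)*(p-1)+1)*p^k = (β*(p-1)+1)*p^k + (p-1)*p^k := by ring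
      omega
    have E5 : p^(k+1) = p^k + (p-1)*p^k := by
      have h1 : p^(k+1) = p^k*p := pow_succ p k
      have h2 : p^k*p = p^k*1 + p^k*(p-1) := by
        rw [← Nat.mul_add]
        congr 1
        omega
      rw [h1, h2]
      ring
    have E2 : p^(k+1) - 1 = (p^k - 1) + (p-1)*p^k := by omega
    have E3 : (p-1)*p^k = (p-2)*p^k + p^k := by
      have e : p - 1 = (p-2)+1 := by omega
      rw [e, add_mul, one_mul]
    have E4 : (p-1)*p^k = ((p-1)*p^k - 1) + 1 := by omega
    have P1 : (X - 1 : Polynomial ℤ)^(((β+1)*(p-1)+1)*p^k - 1)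
        = (X-1)^((β*(p-1)+1)*p^k - 1) * (X-1)^((p-1)*p^k) := by
      rw [E1, pow_add]
    have P2 : (X - 1 : Polynomial ℤ)^(p^(k+1) - 1)
        = (X-1)^(p^k - 1) * (X-1)^((p-1)*p^k) := by rw [E2, pow_add]
    have P3 : (X - 1 : Polynomial ℤ)^(p^(k+1))
        = (X-1)^(p^k) * (X-1)^((p-1)*p^k) := by
      conv_lhs => rw [E5]
      rw [pow_add]
    have P4 : (X - 1 : Polynomial ℤ)^((p-1)*p^k)
        = (X-1)^((p-2)*p^k) * (X-1)^(p^k) := by rw [E3, pow_add]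
    have P5 : (X - 1 : Polynomial ℤ)^((p-1)*p^k)
        = (X-1)^((p-1)*p^k - 1) * (X-1) := by
      conv_lhs => rw [E4]
      rw [pow_succ]
    have P8 : (X - 1 : Polynomial ℤ)^(p^k+1) = (X-1)^(p^k) * (X-1) := pow_succ _ _
    refine ⟨A*(X-1)^((p-1)*p^k) + T*(X-1)^((p-1)*p^k - 1) + T*(-P)*C,
           -C1 + C - (X-1)*c*C - (X-1)^((p-2)*p^k)*D,
           -D1 - (X-1)*g2*C, ?_⟩
    simp only [Nat.add_sub_cancel]
    rw [hT1] at hIH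
    rw [hT1, hT2]
    linear_combination P1 + (X-1)^((p-1)*p^k) * hIH
      + T*N*P5 + T*(X-1)^((p-1)*p^k - 1)*hgq
      + T*P*P2 + T*(-P)*hbase
      + T*P*C*P3 + T*(-P)*C*hL3
      + T*(-P)*P*D*P4 + T*(-P)*P*c*C*P8

/-- Wilson's congruence: in `ℤ[t]`,
`(t-1)^{(β(p-1)+1)p^{α-1} - 1} ≡ (-p)^{β-1} ∑_{i=0}^{p^α - 1} t^i  (mod t^{p^α} - 1, p^β)`. -/
theorem wilson_congruence (p : ℕ) (hp : p.Prime) (α β : ℕ) (hα : 1 ≤ α) (hβ : 1 ≤ β) :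
    (X - 1) ^ ((β * (p - 1) + 1) * p ^ (α - 1) - 1)
        - C ((-(p : ℤ)) ^ (β - 1)) * ∑ i ∈ Finset.range (p ^ α), X ^ i
      ∈ Ideal.span {(X ^ (p ^ α) - 1 : Polynomial ℤ), (C ((p : ℤ) ^ β) : Polynomial ℤ)} := by
  obtain ⟨A, Co, D, hM⟩ := wilson_M p hp (α-1) β hβ
  have hk : α - 1 + 1 = α := by omega
  rw [hk] at hM
  rw [Ideal.mem_span_pair]
  have hC1 : (C ((p:ℤ)^β) : Polynomial ℤ) = (p:Polynomial ℤ)^β := by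
    rw [map_pow, Polynomial.C_eq_natCast]
  have hC2 : (C ((-(p:ℤ))^(β-1)) : Polynomial ℤ) = (-(p:Polynomial ℤ))^(β-1) := by
    rw [map_pow, map_neg, Polynomial.C_eq_natCast]
  rcases Nat.even_or_odd β with hev | hod
  · have hb1 : (-(p:Polynomial ℤ))^β = (p:Polynomial ℤ)^β := hev.neg_pow _
    rw [hb1] at hM
    refine ⟨A, (X-1)^(p^(α-1)-1) + (X-1)^(p^(α-1))*Co + (p:Polynomial ℤ)*D, ?_⟩
    rw [hC1, hC2]
    linear_combination -hM
  · have hb1 : (-(p:Polynomial ℤ))^β = -((p:Polynomial ℤ)^β) := hod.neg_pow _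
    rw [hb1] at hM
    refine ⟨A, -((X-1)^(p^(α-1)-1) + (X-1)^(p^(α-1))*Co + (p:Polynomial ℤ)*D), ?_⟩
    rw [hC1, hC2]
    linear_combination -hM
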